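/- Let U : Δ → Δ be an expanding Young tower with μ(Δ_n) ≤ C·ρⁿ for some ρ < 1. Let φ : Δ₀ → ℕ be the first return time to the basis (φ(x) = inf{n ≥ 1 : Uⁿx ∈ Δ₀}) and U₀ x = U^{φ(x)} x the induced map. Then there exists a constant C' such that for every finite subset F ⊂ ℕ and every family of positive integers (n_i)_{i ∈ F}, μ({x ∈ Δ₀ : ∀ i ∈ F, φ(U₀^i x) = n_i}) ≤ ∏_{i ∈ F} (C'·ρ^{n_i}). -/

import Mathlib

open MeasureTheory Filter Set
open scoped ENNReal NNReal Topology Classical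

/-- A function `f : ℝ → ℝ` is slowly varying if `f (λ x) / f x → 1` as `x → ∞`,
for every `λ > 0`. -/
def SlowlyVarying (f : ℝ → ℝ) : Prop :=
  ∀ lam : ℝ, 0 < lam → Filter.Tendsto (fun x => f (lam * x) / f x) Filter.atTop (nhds 1)

/-- An expanding Young tower on a probability space `(Δ, μ)`, for the map `U`. -/
structure YoungTower {Δ : Type*} [MeasurableSpace Δ] (μ : Measure Δ) (U : Δ → Δ) where
  /-- the height of column `p` -/
  r : ℕ → ℕ
  r_pos : ∀ p, 0 < r p
  /-- `cell k p` is the element `Δ_{k,p}` of the partition -/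
  cell : ℕ → ℕ → Set Δ
  cell_meas : ∀ k p, MeasurableSet (cell k p)
  cell_empty : ∀ k p, r p ≤ k → cell k p = ∅
  cell_cover : ∀ x : Δ, ∃ p k, k < r p ∧ x ∈ cell k p
  cell_disj : ∀ k p k' p', (k, p) ≠ (k', p') → Disjoint (cell k p) (cell k' p')
  measurable_U : Measurable U
  measurePreserving_U : MeasurePreserving U μ μ
  isProb : IsProbabilityMeasure μ
  /-- `U` is a measurable isomorphism from `Δ_{k,p}` onto `Δ_{k+1,p}` when `k < r p - 1`... -/
  map_up : ∀ p k, k + 1 < r p → Set.BijOn U (cell k p) (cell (k + 1) p)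
  /-- ... which is measure preserving -/
  map_up_measure : ∀ p k, k + 1 < r p → ∀ A : Set Δ, A ⊆ cell k p → MeasurableSet A →
      μ (U '' A) = μ A
  /-- `U` is a measurable isomorphism from `Δ_{r_p - 1, p}` onto the basis `⋃ m, Δ_{0,m}` -/
  map_top : ∀ p, Set.BijOn U (cell (r p - 1) p) (⋃ m, cell 0 m)
  /-- the height function `ω` -/
  height : Δ → ℕ
  height_spec : ∀ k p, ∀ x ∈ cell k p, height x = k
  /-- the projection `π₀` to the basis -/
  proj : Δ → Δ
  proj_spec : ∀ k p, ∀ x ∈ cell k p, proj x ∈ cell 0 p ∧ U^[k] (proj x) = x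
  /-- the separation time -/
  s : Δ → Δ → ℕ
  s_eq_zero : ∀ x y : Δ, (¬ ∃ p k, k < r p ∧ x ∈ cell k p ∧ y ∈ cell k p) → s x y = 0
  s_mid : ∀ p k, k + 1 < r p → ∀ x ∈ cell k p, ∀ y ∈ cell k p, s x y = s (U x) (U y)
  s_top : ∀ p, ∀ x ∈ cell (r p - 1) p, ∀ y ∈ cell (r p - 1) p, s x y = 1 + s (U x) (U y)
  /-- the inverse of the Jacobian of `U` -/
  J : Δ → ℝ
  J_meas : Measurable J
  J_pos : ∀ x, 0 < J x
  J_spec : ∀ k p, ∀ A : Set Δ, A ⊆ cell k p → MeasurableSet A →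
      μ (U '' A) = ∫⁻ x in A, ENNReal.ofReal (J x)⁻¹ ∂μ
  /-- distortion constants -/
  Cd : ℝ
  β : ℝ
  Cd_pos : 0 < Cd
  β_pos : 0 < β
  β_lt_one : β < 1
  distortion : ∀ k p, ∀ x ∈ cell k p, ∀ y ∈ cell k p,
      |1 - J x / J y| ≤ Cd * β ^ (s (U x) (U y))

namespace YoungTower

variable {Δ : Type*} [MeasurableSpace Δ] {μ : Measure Δ} {U : Δ → Δ}

/-- The basis `Δ₀` of the tower. -/
def base (T : YoungTower μ U) : Set Δ := ⋃ m, T.cell 0 m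

/-- The set `Δ_n` of points at height `n`. -/
def level (T : YoungTower μ U) (n : ℕ) : Set Δ := ⋃ p, T.cell n p

/-- Exponentially small tails: `μ (Δ_n) ≤ C ρ^n`. -/
def ExpTails (T : YoungTower μ U) (C ρ : ℝ) : Prop :=
  ∀ n : ℕ, μ (T.level n) ≤ ENNReal.ofReal (C * ρ ^ n)

/-- `x` and `y` lie in the same element of the partition. -/
def SameCell (T : YoungTower μ U) (x y : Δ) : Prop :=
  ∃ p k, k < T.r p ∧ x ∈ T.cell k p ∧ y ∈ T.cell k p

/-- A function is locally Hölder (with constants `Cg`, `τ`) if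
`|g x - g y| ≤ Cg τ^(s x y)` for `x, y` in the same partition element. -/
def LocallyHolder (T : YoungTower μ U) (g : Δ → ℝ) (Cg τ : ℝ) : Prop :=
  ∀ x y : Δ, T.SameCell x y → |g x - g y| ≤ Cg * τ ^ (T.s x y)

/-- The first return time to the basis. -/
noncomputable def retTime (T : YoungTower μ U) (x : Δ) : ℕ :=
  sInf {n : ℕ | 0 < n ∧ U^[n] x ∈ T.base}

/-- The induced (first return) map on the basis. -/
noncomputable def retMap (T : YoungTower μ U) (x : Δ) : Δ := U^[T.retTime x] x

/-- `Ψ_n x`: the number of returns of `x` to the basis between times `1` and `n`. -/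
noncomputable def retCount (T : YoungTower μ U) (n : ℕ) (x : Δ) : ℕ :=
  ((Finset.Icc 1 n).filter fun k => U^[k] x ∈ T.base).card

/-- `G x = ∑_{j=0}^{ω(x)-1} g (U^j (π₀ x))`. -/
noncomputable def towerSum (T : YoungTower μ U) (g : Δ → ℝ) (x : Δ) : ℝ :=
  ∑ j ∈ Finset.range (T.height x), g (U^[j] (T.proj x))

/-- The transfer operator `Û u (x) = ∑_{U y = x} J y · u y`. -/
noncomputable def transfer (T : YoungTower μ U) (u : Δ → ℂ) (x : Δ) : ℂ :=
  ∑' y : {y : Δ // U y = x}, (T.J y.1 : ℂ) * u y.1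

/-- The perturbed transfer operator `Û_t u = Û (e^{itg} u)`. -/
noncomputable def transferPert (T : YoungTower μ U) (g : Δ → ℝ) (t : ℝ) (u : Δ → ℂ) :
    Δ → ℂ :=
  T.transfer fun y => Complex.exp (Complex.I * t * g y) * u y

/-- The weighted sup norm `‖u‖_m`. -/
noncomputable def normM (T : YoungTower μ U) (ε : ℝ) (u : Δ → ℂ) : ℝ≥0∞ :=
  sInf {C : ℝ≥0∞ | ∀ n : ℕ, ∀ᵐ x ∂μ, x ∈ T.level n →
    (‖u x‖₊ : ℝ≥0∞) ≤ C * ENNReal.ofReal (Real.exp (ε * n))}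

/-- The weighted Hölder seminorm `‖u‖_l`. -/
noncomputable def normL (T : YoungTower μ U) (ε τ : ℝ) (u : Δ → ℂ) : ℝ≥0∞ :=
  sInf {C : ℝ≥0∞ | ∀ n : ℕ, ∀ᵐ x ∂μ, ∀ᵐ y ∂μ,
    (x ∈ T.level n ∧ T.SameCell x y) →
    (‖u x - u y‖₊ : ℝ≥0∞) ≤ C * ENNReal.ofReal (Real.exp (ε * n) * τ ^ (T.s x y))}

/-- The norm `‖u‖ = ‖u‖_m + ‖u‖_l` of the Banach space `H`. -/
noncomputable def normH (T : YoungTower μ U) (ε τ : ℝ) (u : Δ → ℂ) : ℝ≥0∞ :=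
  T.normM ε u + T.normL ε τ u

/-- Membership in the Banach space `H`. -/
def MemH (T : YoungTower μ U) (ε τ : ℝ) (u : Δ → ℂ) : Prop :=
  Measurable u ∧ T.normH ε τ u < ⊤

end YoungTower
namespace YoungTower

variable {Δ : Type*} [MeasurableSpace Δ] {μ : Measure Δ} {U : Δ → Δ} (T : YoungTower μ U)

lemma base_meas : MeasurableSet T.base :=
  MeasurableSet.iUnion fun m => T.cell_meas 0 m

lemma level_meas (n : ℕ) : MeasurableSet (T.level n) :=
  MeasurableSet.iUnion fun p => T.cell_meas n p

lemma cell_disj_base {k : ℕ} (p : ℕ) (hk : k ≠ 0) : Disjoint (T.cell k p) T.base := by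
  rw [base, Set.disjoint_iUnion_right]
  intro m
  exact T.cell_disj k p 0 m (by simp [hk])

lemma orbit_mem {p : ℕ} {x : Δ} (hx : x ∈ T.cell 0 p) :
    ∀ {k : ℕ}, k < T.r p → U^[k] x ∈ T.cell k p := by
  intro k
  induction k with
  | zero => intro _; simpa using hx
  | succ k ih =>
    intro hk
    rw [Function.iterate_succ_apply']
    exact (T.map_up p k hk).mapsTo (ih (Nat.lt_of_succ_lt hk))

lemma iterate_r_mem_base {p : ℕ} {x : Δ} (hx : x ∈ T.cell 0 p) : U^[T.r p] x ∈ T.base := by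
  have hq : T.r p - 1 + 1 = T.r p := Nat.succ_pred_eq_of_pos (T.r_pos p)
  have h1 : U^[T.r p - 1] x ∈ T.cell (T.r p - 1) p := T.orbit_mem hx (by omega)
  have : U^[T.r p] x = U (U^[T.r p - 1] x) := by
    conv_lhs => rw [← hq]
    rw [Function.iterate_succ_apply']
  rw [this]
  exact (T.map_top p).mapsTo h1

lemma retTime_eq {p : ℕ} {x : Δ} (hx : x ∈ T.cell 0 p) : T.retTime x = T.r p := by
  have hmem : T.r p ∈ {n : ℕ | 0 < n ∧ U^[n] x ∈ T.base} := ⟨T.r_pos p, T.iterate_r_mem_base hx⟩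
  refine le_antisymm (Nat.sInf_le hmem) ?_
  by_contra h
  push_neg at h
  have hne : {n : ℕ | 0 < n ∧ U^[n] x ∈ T.base}.Nonempty := ⟨_, hmem⟩
  obtain ⟨hpos, hbase⟩ := Nat.sInf_mem hne
  have hlt : sInf {n : ℕ | 0 < n ∧ U^[n] x ∈ T.base} < T.r p := h
  have hcell : U^[sInf {n : ℕ | 0 < n ∧ U^[n] x ∈ T.base}] x
      ∈ T.cell (sInf {n : ℕ | 0 < n ∧ U^[n] x ∈ T.base}) p := T.orbit_mem hx hlt
  exact Set.disjoint_left.1 (T.cell_disj_base p hpos.ne') hcell hbase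

lemma retMap_eq {p : ℕ} {x : Δ} (hx : x ∈ T.cell 0 p) : T.retMap x = U^[T.r p] x := by
  rw [retMap, T.retTime_eq hx]

lemma mem_base_iff {x : Δ} : x ∈ T.base ↔ ∃ p, x ∈ T.cell 0 p := Set.mem_iUnion

lemma retMap_mem_base {x : Δ} (hx : x ∈ T.base) : T.retMap x ∈ T.base := by
  obtain ⟨p, hp⟩ := T.mem_base_iff.mp hx
  rw [T.retMap_eq hp]
  exact T.iterate_r_mem_base hp

lemma retMap_iterate_mem_base {x : Δ} (hx : x ∈ T.base) (i : ℕ) : T.retMap^[i] x ∈ T.base := by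
  induction i with
  | zero => simpa using hx
  | succ i ih => rw [Function.iterate_succ_apply']; exact T.retMap_mem_base ih

lemma measure_cell_eq {p : ℕ} : ∀ {k : ℕ}, k < T.r p → μ (T.cell k p) = μ (T.cell 0 p) := by
  intro k
  induction k with
  | zero => intro _; rfl
  | succ k ih =>
    intro hk
    have h1 : μ (U '' T.cell k p) = μ (T.cell k p) :=
      T.map_up_measure p k hk _ subset_rfl (T.cell_meas k p)
    rw [← (T.map_up p k hk).image_eq, h1]
    exact ih (Nat.lt_of_succ_lt hk)

lemma measure_pull (p : ℕ) : ∀ (j k : ℕ) (B : Set Δ), MeasurableSet B →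
    B ⊆ T.cell (k + j) p → k + j < T.r p →
    μ (T.cell k p ∩ U^[j] ⁻¹' B) = μ B := by
  intro j
  induction j with
  | zero =>
    intro k B hB hsub _
    simp only [Function.iterate_zero, Set.preimage_id]
    rw [Set.inter_eq_right.mpr (by simpa using hsub)]
  | succ j ih =>
    intro k B hB hsub hlt
    have hk1 : k + 1 < T.r p := by omega
    set B' := T.cell (k + 1) p ∩ U^[j] ⁻¹' B with hB'def
    have hB'meas : MeasurableSet B' :=
      (T.cell_meas _ _).inter ((T.measurable_U.iterate j) hB)
    have h1 : T.cell k p ∩ U^[j + 1] ⁻¹' B = T.cell k p ∩ U ⁻¹' B' := by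
      ext x
      simp only [Set.mem_inter_iff, Set.mem_preimage, Function.iterate_succ_apply, hB'def]
      constructor
      · rintro ⟨hx, hUx⟩
        exact ⟨hx, (T.map_up p k hk1).mapsTo hx, hUx⟩
      · rintro ⟨hx, _, hUx⟩
        exact ⟨hx, hUx⟩
    have h2 : U '' (T.cell k p ∩ U ⁻¹' B') = B' := by
      apply Set.Subset.antisymm
      · rintro _ ⟨x, ⟨_, hxB⟩, rfl⟩
        exact hxB
      · intro b hb
        have hb' : b ∈ U '' T.cell k p := by
          rw [(T.map_up p k hk1).image_eq]
          exact Set.inter_subset_left hb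
        obtain ⟨x, hx, rfl⟩ := hb'
        exact ⟨x, ⟨hx, hb⟩, rfl⟩
    have h3 : μ (U '' (T.cell k p ∩ U ⁻¹' B')) = μ (T.cell k p ∩ U ⁻¹' B') :=
      T.map_up_measure p k hk1 _ Set.inter_subset_left
        ((T.cell_meas k p).inter (T.measurable_U hB'meas))
    have h4 : μ B' = μ B := by
      exact ih (k + 1) B hB (by rw [show k + 1 + j = k + (j + 1) from by omega]; exact hsub)
        (by omega)
    rw [h1, ← h3, h2, h4]

lemma Jinv_comp {p k : ℕ} {x y : Δ} (hx : x ∈ T.cell k p) (hy : y ∈ T.cell k p) :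
    (T.J y)⁻¹ ≤ (1 + T.Cd) * (T.J x)⁻¹ := by
  have hd := T.distortion k p x hx y hy
  have hβ : T.β ^ T.s (U x) (U y) ≤ 1 :=
    pow_le_one₀ T.β_pos.le T.β_lt_one.le
  have hCd := T.Cd_pos
  have h1 : |1 - T.J x / T.J y| ≤ T.Cd := by
    calc |1 - T.J x / T.J y| ≤ T.Cd * T.β ^ T.s (U x) (U y) := hd
    _ ≤ T.Cd * 1 := by nlinarith [pow_nonneg T.β_pos.le (T.s (U x) (U y))]
    _ = T.Cd := mul_one _
  have h2 : T.J x / T.J y ≤ 1 + T.Cd := by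
    have := (abs_le.mp h1).1
    linarith
  have hJx := T.J_pos x
  have hJy := T.J_pos y
  have h3 : T.J x ≤ (1 + T.Cd) * T.J y := by
    rw [div_le_iff₀ hJy] at h2
    linarith
  have h5 : (T.J y)⁻¹ = T.J x * ((T.J x)⁻¹ * (T.J y)⁻¹) := by
    field_simp
  have h6 : T.J x * ((T.J x)⁻¹ * (T.J y)⁻¹) ≤ (1 + T.Cd) * T.J y * ((T.J x)⁻¹ * (T.J y)⁻¹) :=
    mul_le_mul_of_nonneg_right h3 (by positivity)
  have h7 : (1 + T.Cd) * T.J y * ((T.J x)⁻¹ * (T.J y)⁻¹) = (1 + T.Cd) * (T.J x)⁻¹ := by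
    field_simp
  rw [h5]
  rw [h7] at h6
  exact h6

lemma top_slice (p : ℕ) (E : Set Δ) (hE : MeasurableSet E) :
    μ (T.cell 0 p ∩ U^[T.r p] ⁻¹' E) = μ (T.cell (T.r p - 1) p ∩ U ⁻¹' E) := by
  obtain ⟨q, hq⟩ : ∃ q, T.r p = q + 1 := ⟨T.r p - 1, (Nat.succ_pred_eq_of_pos (T.r_pos p)).symm⟩
  have hq1 : T.r p - 1 = q := by omega
  have hq' : q < T.r p := by omega
  rw [hq1]
  set B := T.cell q p ∩ U ⁻¹' E with hBdef
  have hBmeas : MeasurableSet B := (T.cell_meas q p).inter (T.measurable_U hE)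
  have hA : T.cell 0 p ∩ U^[T.r p] ⁻¹' E = T.cell 0 p ∩ U^[q] ⁻¹' B := by
    ext x
    simp only [Set.mem_inter_iff, Set.mem_preimage, hq, Function.iterate_succ_apply', hBdef]
    constructor
    · rintro ⟨hx, hUx⟩
      exact ⟨hx, T.orbit_mem hx hq', hUx⟩
    · rintro ⟨hx, _, hUx⟩
      exact ⟨hx, hUx⟩
  rw [hA]
  exact T.measure_pull p q 0 B hBmeas (by rw [Nat.zero_add]; exact Set.inter_subset_left) (by simpa using hq')

lemma key_distortion (p : ℕ) (E : Set Δ) (hE : MeasurableSet E) (hEsub : E ⊆ T.base) :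
    μ (T.cell 0 p ∩ U^[T.r p] ⁻¹' E) * μ T.base ≤
      ENNReal.ofReal (1 + T.Cd) * μ (T.cell 0 p) * μ E := by
  obtain ⟨q, hq⟩ : ∃ q, T.r p = q + 1 := ⟨T.r p - 1, (Nat.succ_pred_eq_of_pos (T.r_pos p)).symm⟩
  have hq1 : T.r p - 1 = q := by omega
  have hq' : q < T.r p := by omega
  have hmt := T.map_top p
  rw [hq1] at hmt
  set c := T.cell q p with hcdef
  set B := c ∩ U ⁻¹' E with hBdef
  have hBmeas : MeasurableSet B := (T.cell_meas q p).inter (T.measurable_U hE)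
  have hμA : μ (T.cell 0 p ∩ U^[T.r p] ⁻¹' E) = μ B := by
    rw [T.top_slice p E hE, hq1]
  have hUB : U '' B = E := by
    apply Set.Subset.antisymm
    · rintro _ ⟨x, ⟨_, hxE⟩, rfl⟩
      exact hxE
    · intro e he
      have : e ∈ U '' c := by
        rw [hmt.image_eq]
        exact hEsub he
      obtain ⟨x, hx, rfl⟩ := this
      exact ⟨x, ⟨hx, he⟩, rfl⟩
  have hμE : μ E = ∫⁻ x in B, ENNReal.ofReal (T.J x)⁻¹ ∂μ := by
    rw [← hUB]
    exact T.J_spec q p B Set.inter_subset_left hBmeas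
  have hμbase : μ T.base = ∫⁻ x in c, ENNReal.ofReal (T.J x)⁻¹ ∂μ := by
    have : T.base = U '' c := hmt.image_eq.symm
    rw [this]
    exact T.J_spec q p c subset_rfl (T.cell_meas q p)
  have hg : Measurable fun x => ENNReal.ofReal (T.J x)⁻¹ :=
    ENNReal.measurable_ofReal.comp T.J_meas.inv
  have hCd := T.Cd_pos
  have key : ∀ y ∈ c, μ B * ENNReal.ofReal (T.J y)⁻¹ ≤ ENNReal.ofReal (1 + T.Cd) * μ E := by
    intro y hy
    have h1 : μ B * ENNReal.ofReal (T.J y)⁻¹ = ∫⁻ _ in B, ENNReal.ofReal (T.J y)⁻¹ ∂μ := by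
      rw [setLIntegral_const, mul_comm]
    rw [h1, hμE, ← lintegral_const_mul _ hg]
    refine setLIntegral_mono (measurable_const.mul hg) ?_
    intro x hx
    have hcomp : (T.J y)⁻¹ ≤ (1 + T.Cd) * (T.J x)⁻¹ := T.Jinv_comp hx.1 hy
    calc ENNReal.ofReal (T.J y)⁻¹ ≤ ENNReal.ofReal ((1 + T.Cd) * (T.J x)⁻¹) :=
          ENNReal.ofReal_le_ofReal hcomp
    _ = ENNReal.ofReal (1 + T.Cd) * ENNReal.ofReal (T.J x)⁻¹ :=
          ENNReal.ofReal_mul (by linarith)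
  have hμc : μ c = μ (T.cell 0 p) := T.measure_cell_eq hq'
  calc μ (T.cell 0 p ∩ U^[T.r p] ⁻¹' E) * μ T.base
      = μ B * ∫⁻ y in c, ENNReal.ofReal (T.J y)⁻¹ ∂μ := by rw [hμA, hμbase]
    _ = ∫⁻ y in c, μ B * ENNReal.ofReal (T.J y)⁻¹ ∂μ := by
        rw [lintegral_const_mul _ hg]
    _ ≤ ∫⁻ _ in c, ENNReal.ofReal (1 + T.Cd) * μ E ∂μ :=
        setLIntegral_mono measurable_const key
    _ = ENNReal.ofReal (1 + T.Cd) * μ E * μ c := setLIntegral_const _ _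
    _ = ENNReal.ofReal (1 + T.Cd) * μ (T.cell 0 p) * μ E := by rw [hμc]; ring

lemma measurableSet_retTime_eq (n : ℕ) : MeasurableSet {x | T.retTime x = n} := by
  have hg : ∀ k : ℕ, MeasurableSet ((U^[k]) ⁻¹' T.base) :=
    fun k => (T.measurable_U.iterate k) T.base_meas
  cases n with
  | zero =>
    have : {x | T.retTime x = 0} = ⋂ k : ℕ, ((U^[k+1]) ⁻¹' T.base)ᶜ := by
      ext x
      simp only [Set.mem_setOf_eq, Set.mem_iInter, Set.mem_compl_iff, Set.mem_preimage]
      constructor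
      · intro h k hk
        have hne : {n : ℕ | 0 < n ∧ U^[n] x ∈ T.base}.Nonempty := ⟨k + 1, Nat.succ_pos k, hk⟩
        obtain ⟨hpos, -⟩ := Nat.sInf_mem hne
        rw [retTime] at h
        omega
      · intro h
        rw [retTime, Nat.sInf_eq_zero]
        right
        ext k
        simp only [Set.mem_setOf_eq, Set.mem_empty_iff_false, iff_false, not_and]
        intro hk
        obtain ⟨k', rfl⟩ : ∃ k', k = k' + 1 := ⟨k - 1, by omega⟩
        exact h k'
    rw [this]
    exact MeasurableSet.iInter fun k => (hg (k+1)).compl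
  | succ n =>
    have : {x | T.retTime x = n + 1} =
        ((U^[n+1]) ⁻¹' T.base) ∩ ⋂ (k : ℕ) (_ : 0 < k ∧ k < n + 1), ((U^[k]) ⁻¹' T.base)ᶜ := by
      ext x
      simp only [Set.mem_setOf_eq, Set.mem_inter_iff, Set.mem_preimage, Set.mem_iInter,
        Set.mem_compl_iff]
      constructor
      · intro h
        have hne : {m : ℕ | 0 < m ∧ U^[m] x ∈ T.base}.Nonempty := by
          by_contra hemp
          rw [Set.not_nonempty_iff_eq_empty] at hemp
          rw [retTime, hemp] at h
          simp at h
        have hmem := Nat.sInf_mem hne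
        rw [retTime] at h
        rw [h] at hmem
        refine ⟨hmem.2, ?_⟩
        intro k hk hbase
        have : sInf {m : ℕ | 0 < m ∧ U^[m] x ∈ T.base} ≤ k := Nat.sInf_le ⟨hk.1, hbase⟩
        omega
      · rintro ⟨hb, hlt⟩
        have hmem : (n + 1) ∈ {m : ℕ | 0 < m ∧ U^[m] x ∈ T.base} := ⟨Nat.succ_pos n, hb⟩
        rw [retTime]
        refine le_antisymm (Nat.sInf_le hmem) ?_
        by_contra h
        push_neg at h
        obtain ⟨hpos, hbase⟩ := Nat.sInf_mem ⟨_, hmem⟩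
        exact hlt _ ⟨hpos, h⟩ hbase
    rw [this]
    exact (hg (n+1)).inter (MeasurableSet.iInter fun k => MeasurableSet.iInter fun _ => (hg k).compl)

lemma measurable_retTime : Measurable T.retTime :=
  measurable_to_countable' fun n => T.measurableSet_retTime_eq n

lemma measurable_retMap : Measurable T.retMap := by
  have h1 : Measurable fun q : Δ × ℕ => U^[q.2] q.1 :=
    measurable_from_prod_countable_left fun n => T.measurable_U.iterate n
  exact h1.comp (measurable_id.prodMk T.measurable_retTime)

lemma measurableSet_S (F : Finset ℕ) (m : ℕ → ℕ) :
    MeasurableSet {x | x ∈ T.base ∧ ∀ i ∈ F, T.retTime (T.retMap^[i] x) = m i} := by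
  have : {x | x ∈ T.base ∧ ∀ i ∈ F, T.retTime (T.retMap^[i] x) = m i}
      = T.base ∩ ⋂ (i : ℕ) (_ : i ∈ F), (T.retMap^[i]) ⁻¹' {y | T.retTime y = m i} := by
    ext x
    simp [Set.mem_iInter]
  rw [this]
  exact T.base_meas.inter <| MeasurableSet.iInter fun i => MeasurableSet.iInter fun _ =>
    (T.measurable_retMap.iterate i) (T.measurableSet_retTime_eq (m i))

lemma base_pos : μ T.base ≠ 0 := by
  intro h
  have hc : ∀ p, μ (T.cell 0 p) = 0 := fun p =>
    measure_mono_null (Set.subset_iUnion (fun m => T.cell 0 m) p) h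
  have hall : ∀ q : ℕ × ℕ, μ (T.cell q.1 q.2) = 0 := by
    rintro ⟨k, p⟩
    rcases lt_or_ge k (T.r p) with hk | hk
    · exact (T.measure_cell_eq hk).trans (hc p)
    · rw [T.cell_empty k p hk, measure_empty]
  haveI := T.isProb
  have hcover : (Set.univ : Set Δ) ⊆ ⋃ q : ℕ × ℕ, T.cell q.1 q.2 := by
    intro x _
    obtain ⟨p, k, _, hx⟩ := T.cell_cover x
    exact Set.mem_iUnion.mpr ⟨(k, p), hx⟩
  have : (1 : ℝ≥0∞) ≤ 0 := by
    calc (1 : ℝ≥0∞) = μ Set.univ := measure_univ.symm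
    _ ≤ μ (⋃ q : ℕ × ℕ, T.cell q.1 q.2) := measure_mono hcover
    _ ≤ ∑' q : ℕ × ℕ, μ (T.cell q.1 q.2) := measure_iUnion_le _
    _ = 0 := by simp [hall]
  simp at this

lemma retMap_invariance (E : Set Δ) (hE : MeasurableSet E) (hEsub : E ⊆ T.base) :
    μ (T.base ∩ T.retMap ⁻¹' E) = μ E := by
  have hUpre : μ (U ⁻¹' E) = μ E :=
    T.measurePreserving_U.measure_preimage hE.nullMeasurableSet
  -- decompose U ⁻¹' E over the partition
  have hdecomp : U ⁻¹' E = ⋃ q : ℕ × ℕ, (T.cell q.1 q.2 ∩ U ⁻¹' E) := by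
    apply Set.Subset.antisymm
    · intro x hx
      obtain ⟨p, k, _, hcell⟩ := T.cell_cover x
      exact Set.mem_iUnion.mpr ⟨(k, p), hcell, hx⟩
    · exact Set.iUnion_subset fun q => Set.inter_subset_right
  have hdisj : Pairwise (Function.onFun Disjoint fun q : ℕ × ℕ => T.cell q.1 q.2 ∩ U ⁻¹' E) := by
    intro q q' hne
    exact ((T.cell_disj q.1 q.2 q'.1 q'.2 (by simpa [Prod.ext_iff] using hne)).mono
      Set.inter_subset_left Set.inter_subset_left)
  have hmeas : ∀ q : ℕ × ℕ, MeasurableSet (T.cell q.1 q.2 ∩ U ⁻¹' E) :=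
    fun q => (T.cell_meas q.1 q.2).inter (T.measurable_U hE)
  have hsum : μ (U ⁻¹' E) = ∑' q : ℕ × ℕ, μ (T.cell q.1 q.2 ∩ U ⁻¹' E) := by
    conv_lhs => rw [hdecomp]
    exact measure_iUnion hdisj hmeas
  -- inner sums: only the top level contributes
  have hterm : ∀ p k, k ≠ T.r p - 1 → μ (T.cell k p ∩ U ⁻¹' E) = 0 := by
    intro p k hk
    rcases lt_or_ge k (T.r p) with hklt | hkge
    · have hk1 : k + 1 < T.r p := by omega
      have : T.cell k p ∩ U ⁻¹' E = ∅ := by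
        rw [Set.eq_empty_iff_forall_notMem]
        rintro x ⟨hxc, hxE⟩
        have hUx : U x ∈ T.cell (k+1) p := (T.map_up p k hk1).mapsTo hxc
        exact Set.disjoint_left.1 (T.cell_disj_base p (Nat.succ_ne_zero k)) hUx (hEsub hxE)
      rw [this, measure_empty]
    · rw [T.cell_empty k p hkge]
      simp
  have hswap : ∑' q : ℕ × ℕ, μ (T.cell q.1 q.2 ∩ U ⁻¹' E)
      = ∑' p : ℕ, μ (T.cell (T.r p - 1) p ∩ U ⁻¹' E) := by
    calc ∑' q : ℕ × ℕ, μ (T.cell q.1 q.2 ∩ U ⁻¹' E)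
        = ∑' q : ℕ × ℕ, μ (T.cell q.2 q.1 ∩ U ⁻¹' E) :=
          ((Equiv.prodComm ℕ ℕ).tsum_eq fun q : ℕ × ℕ => μ (T.cell q.1 q.2 ∩ U ⁻¹' E)).symm
      _ = ∑' (p : ℕ) (k : ℕ), μ (T.cell k p ∩ U ⁻¹' E) := ENNReal.tsum_prod'
      _ = ∑' p : ℕ, μ (T.cell (T.r p - 1) p ∩ U ⁻¹' E) :=
          tsum_congr fun p => tsum_eq_single (T.r p - 1) fun k hk => hterm p k hk
  -- left-hand side decomposition
  have hLdecomp : T.base ∩ T.retMap ⁻¹' E = ⋃ p : ℕ, (T.cell 0 p ∩ U^[T.r p] ⁻¹' E) := by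
    apply Set.Subset.antisymm
    · rintro x ⟨hxb, hxE⟩
      obtain ⟨p, hp⟩ := T.mem_base_iff.mp hxb
      refine Set.mem_iUnion.mpr ⟨p, hp, ?_⟩
      rwa [Set.mem_preimage, ← T.retMap_eq hp]
    · intro x hx
      obtain ⟨p, hp, hxE⟩ := Set.mem_iUnion.mp hx
      exact ⟨T.mem_base_iff.mpr ⟨p, hp⟩, by rwa [Set.mem_preimage, T.retMap_eq hp]⟩
  have hLdisj : Pairwise (Function.onFun Disjoint fun p : ℕ => T.cell 0 p ∩ U^[T.r p] ⁻¹' E) := by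
    intro p p' hne
    exact (T.cell_disj 0 p 0 p' (by simpa using hne)).mono
      Set.inter_subset_left Set.inter_subset_left
  have hLmeas : ∀ p : ℕ, MeasurableSet (T.cell 0 p ∩ U^[T.r p] ⁻¹' E) :=
    fun p => (T.cell_meas 0 p).inter ((T.measurable_U.iterate (T.r p)) hE)
  calc μ (T.base ∩ T.retMap ⁻¹' E)
      = ∑' p : ℕ, μ (T.cell 0 p ∩ U^[T.r p] ⁻¹' E) := by
        rw [hLdecomp, measure_iUnion hLdisj hLmeas]
    _ = ∑' p : ℕ, μ (T.cell (T.r p - 1) p ∩ U ⁻¹' E) :=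
        tsum_congr fun p => T.top_slice p E hE
    _ = μ (U ⁻¹' E) := by rw [hsum, hswap]
    _ = μ E := hUpre

lemma retMap_invariance_iter (E : Set Δ) (hE : MeasurableSet E) (hEsub : E ⊆ T.base) :
    ∀ k : ℕ, μ (T.base ∩ (T.retMap^[k]) ⁻¹' E) = μ E := by
  intro k
  induction k with
  | zero =>
    simp only [Function.iterate_zero, Set.preimage_id]
    rw [Set.inter_eq_right.mpr hEsub]
  | succ k ih =>
    have hE' : MeasurableSet (T.base ∩ (T.retMap^[k]) ⁻¹' E) :=
      T.base_meas.inter ((T.measurable_retMap.iterate k) hE)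
    have hstep : T.base ∩ (T.retMap^[k+1]) ⁻¹' E
        = T.base ∩ T.retMap ⁻¹' (T.base ∩ (T.retMap^[k]) ⁻¹' E) := by
      ext x
      simp only [Set.mem_inter_iff, Set.mem_preimage, Function.iterate_succ_apply]
      constructor
      · rintro ⟨hx, h⟩
        exact ⟨hx, T.retMap_mem_base hx, h⟩
      · rintro ⟨hx, _, h⟩
        exact ⟨hx, h⟩
    rw [hstep, T.retMap_invariance _ hE' Set.inter_subset_left, ih]

lemma sum_cells_level {C0 ρ : ℝ} (htails : T.ExpTails C0 ρ) (n : ℕ) :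
    ∑' p : ℕ, μ (if T.r p = n then T.cell (n - 1) p else ∅) ≤
      ENNReal.ofReal (C0 * ρ ^ (n - 1)) := by
  have hmeas : ∀ p : ℕ, MeasurableSet (if T.r p = n then T.cell (n - 1) p else ∅) := by
    intro p; split_ifs
    exacts [T.cell_meas _ _, MeasurableSet.empty]
  have hsub : ∀ p : ℕ, (if T.r p = n then T.cell (n - 1) p else ∅) ⊆ T.cell (n - 1) p := by
    intro p; split_ifs
    exacts [subset_rfl, Set.empty_subset _]
  have hdisj : Pairwise (Function.onFun Disjoint
      fun p : ℕ => if T.r p = n then T.cell (n - 1) p else ∅) := by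
    intro p p' hne
    exact (T.cell_disj (n - 1) p (n - 1) p' (by simpa using hne)).mono (hsub p) (hsub p')
  calc ∑' p : ℕ, μ (if T.r p = n then T.cell (n - 1) p else ∅)
      = μ (⋃ p : ℕ, if T.r p = n then T.cell (n - 1) p else ∅) :=
        (measure_iUnion hdisj hmeas).symm
    _ ≤ μ (T.level (n - 1)) := by
        refine measure_mono (Set.iUnion_subset fun p => ?_)
        exact (hsub p).trans (Set.subset_iUnion (fun p => T.cell (n - 1) p) p)
    _ ≤ ENNReal.ofReal (C0 * ρ ^ (n - 1)) := htails (n - 1)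

end YoungTower

/-- Lemma `lem_KFn`: on an expanding Young tower with `μ(Δ_n) ≤ C ρⁿ`, there is a constant
`C'` such that for every finite `F ⊂ ℕ` and positive integers `(n_i)_{i ∈ F}`, the measure
of `{x ∈ Δ₀ : ∀ i ∈ F, φ(U₀^i x) = n_i}` is at most `∏_{i ∈ F} C' ρ^{n_i}`. -/
theorem return_time_cylinder_estimate
    {Δ : Type*} [MeasurableSpace Δ] {μ : Measure Δ} {U : Δ → Δ}
    (T : YoungTower μ U)
    (C0 ρ : ℝ) (hC0 : 0 < C0) (hρ0 : 0 < ρ) (hρ1 : ρ < 1) (htails : T.ExpTails C0 ρ) :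
    ∃ C' : ℝ, 0 < C' ∧ ∀ (F : Finset ℕ) (m : ℕ → ℕ), (∀ i ∈ F, 0 < m i) →
      μ {x : Δ | x ∈ T.base ∧ ∀ i ∈ F, T.retTime (T.retMap^[i] x) = m i} ≤
        ENNReal.ofReal (∏ i ∈ F, C' * ρ ^ (m i)) := by
    classical
  haveI := T.isProb
  have hbne : μ T.base ≠ 0 := T.base_pos
  have hbtop : μ T.base ≠ ⊤ := measure_ne_top μ T.base
  set b0 : ℝ := (μ T.base).toReal with hb0def
  have hb0 : 0 < b0 := ENNReal.toReal_pos hbne hbtop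
  have hbeq : ENNReal.ofReal b0 = μ T.base := ENNReal.ofReal_toReal hbtop
  have hCd := T.Cd_pos
  set K : ℝ := max 1 ((1 + T.Cd) * C0 / (ρ * b0)) with hKdef
  have hK1 : (1 : ℝ) ≤ K := le_max_left _ _
  have hK0 : 0 < K := lt_of_lt_of_le one_pos hK1
  have hKge : (1 + T.Cd) * C0 / (ρ * b0) ≤ K := le_max_right _ _
  refine ⟨K, hK0, ?_⟩
  have main : ∀ (N : ℕ) (F : Finset ℕ) (m : ℕ → ℕ), F.card = N → (∀ i ∈ F, 0 < m i) →
      μ {x : Δ | x ∈ T.base ∧ ∀ i ∈ F, T.retTime (T.retMap^[i] x) = m i} ≤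
        ∏ i ∈ F, ENNReal.ofReal (K * ρ ^ m i) := by
    intro N
    induction N with
    | zero =>
      intro F m hcard _
      rw [Finset.card_eq_zero] at hcard
      subst hcard
      simp only [Finset.notMem_empty, false_implies, implies_true, and_true, Finset.prod_empty]
      calc μ {x : Δ | x ∈ T.base} ≤ μ Set.univ := measure_mono (Set.subset_univ _)
        _ = 1 := measure_univ
    | succ N ih =>
      intro F m hcard hm
      have hne : F.Nonempty := Finset.card_pos.mp (by omega)
      set i₀ := F.min' hne with hi₀def
      have hi₀F : i₀ ∈ F := F.min'_mem hne
      set n := m i₀ with hndef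
      have hn : 0 < n := hm i₀ hi₀F
      have hlow : ∀ i ∈ F.erase i₀, i₀ + 1 ≤ i := by
        intro i hi
        have h1 := F.min'_le i (Finset.mem_of_mem_erase hi)
        have h2 := Finset.ne_of_mem_erase hi
        omega
      have hiter : ∀ i, i₀ + 1 ≤ i → ∀ y : Δ,
          T.retMap^[i - (i₀ + 1)] (T.retMap (T.retMap^[i₀] y)) = T.retMap^[i] y := by
        intro i hge y
        rw [← Function.iterate_succ_apply' T.retMap i₀ y,
          ← Function.iterate_add_apply T.retMap (i - (i₀ + 1)) (i₀ + 1) y,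
          show i - (i₀ + 1) + (i₀ + 1) = i from by omega]
      have hinj' : ∀ a ∈ F.erase i₀, ∀ b ∈ F.erase i₀,
          a - (i₀ + 1) = b - (i₀ + 1) → a = b := by
        intro a ha b hb hab
        have := hlow a ha
        have := hlow b hb
        omega
      set F' := (F.erase i₀).image (fun j => j - (i₀ + 1)) with hF'def
      set m' : ℕ → ℕ := fun j => m (j + (i₀ + 1)) with hm'def
      have hF'card : F'.card = N := by
        rw [hF'def, Finset.card_image_of_injOn
          (fun a ha b hb hab => hinj' a (Finset.mem_coe.mp ha) b (Finset.mem_coe.mp hb) hab),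
          Finset.card_erase_of_mem hi₀F, hcard]
        omega
      set S' := {z : Δ | z ∈ T.base ∧ ∀ j ∈ F', T.retTime (T.retMap^[j] z) = m' j} with hS'def
      have hS'meas : MeasurableSet S' := T.measurableSet_S F' m'
      have hS'sub : S' ⊆ T.base := fun z hz => hz.1
      have hS'bound : μ S' ≤ ∏ j ∈ F', ENNReal.ofReal (K * ρ ^ m' j) := by
        apply ih F' m' hF'card
        intro j hj
        rw [hF'def] at hj
        obtain ⟨i, hi, rfl⟩ := Finset.mem_image.mp hj
        have := hlow i hi
        show 0 < m (i - (i₀ + 1) + (i₀ + 1))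
        rw [show i - (i₀ + 1) + (i₀ + 1) = i from by omega]
        exact hm i (Finset.mem_of_mem_erase hi)
      have hprod : ∏ j ∈ F', ENNReal.ofReal (K * ρ ^ m' j)
          = ∏ i ∈ F.erase i₀, ENNReal.ofReal (K * ρ ^ m i) := by
        rw [hF'def, Finset.prod_image hinj']
        refine Finset.prod_congr rfl fun i hi => ?_
        have := hlow i hi
        have hmi : m' (i - (i₀ + 1)) = m i := by
          show m (i - (i₀ + 1) + (i₀ + 1)) = m i
          rw [show i - (i₀ + 1) + (i₀ + 1) = i from by omega]
        rw [hmi]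
      set Tset := {y : Δ | y ∈ T.base ∧ T.retTime y = n ∧ T.retMap y ∈ S'} with hTdef
      have hTmeas : MeasurableSet Tset := by
        have : Tset = (T.base ∩ {y | T.retTime y = n}) ∩ T.retMap ⁻¹' S' := by
          ext y
          simp only [hTdef, Set.mem_setOf_eq, Set.mem_inter_iff, Set.mem_preimage]
          tauto
        rw [this]
        exact (T.base_meas.inter (T.measurableSet_retTime_eq n)).inter
          (T.measurable_retMap hS'meas)
      have hTsub : Tset ⊆ T.base := fun y hy => hy.1
      have hSid : {x : Δ | x ∈ T.base ∧ ∀ i ∈ F, T.retTime (T.retMap^[i] x) = m i}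
          = T.base ∩ (T.retMap^[i₀]) ⁻¹' Tset := by
        ext x
        simp only [Set.mem_setOf_eq, Set.mem_inter_iff, Set.mem_preimage, hTdef, hS'def]
        constructor
        · rintro ⟨hx, hcond⟩
          refine ⟨hx, T.retMap_iterate_mem_base hx i₀, hcond i₀ hi₀F, ?_, ?_⟩
          · rw [← Function.iterate_succ_apply' T.retMap i₀ x]
            exact T.retMap_iterate_mem_base hx (i₀ + 1)
          · intro j hj
            rw [hF'def] at hj
            obtain ⟨i, hi, rfl⟩ := Finset.mem_image.mp hj
            have hge := hlow i hi
            have hmi : m' (i - (i₀ + 1)) = m i := by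
              show m (i - (i₀ + 1) + (i₀ + 1)) = m i
              rw [show i - (i₀ + 1) + (i₀ + 1) = i from by omega]
            rw [hmi, hiter i hge x]
            exact hcond i (Finset.mem_of_mem_erase hi)
        · rintro ⟨hx, _, hret, _, hcond⟩
          refine ⟨hx, fun i hi => ?_⟩
          rcases eq_or_ne i i₀ with rfl | hne'
          · exact hret
          · have hi' : i ∈ F.erase i₀ := Finset.mem_erase.mpr ⟨hne', hi⟩
            have hge := hlow i hi'
            have hj : i - (i₀ + 1) ∈ F' := by
              rw [hF'def]
              exact Finset.mem_image.mpr ⟨i, hi', rfl⟩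
            have hc := hcond _ hj
            have hmi : m' (i - (i₀ + 1)) = m i := by
              show m (i - (i₀ + 1) + (i₀ + 1)) = m i
              rw [show i - (i₀ + 1) + (i₀ + 1) = i from by omega]
            rw [hmi, hiter i hge x] at hc
            exact hc
      have hμS : μ {x : Δ | x ∈ T.base ∧ ∀ i ∈ F, T.retTime (T.retMap^[i] x) = m i} = μ Tset := by
        rw [hSid]
        exact T.retMap_invariance_iter Tset hTmeas hTsub i₀
      set D := ENNReal.ofReal (1 + T.Cd) with hDdef
      have hcover : Tset ⊆ ⋃ p : ℕ, (if T.r p = n then T.cell 0 p ∩ U^[T.r p] ⁻¹' S' else ∅) := by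
        rintro y ⟨hyb, hyt, hyS⟩
        obtain ⟨p, hp⟩ := T.mem_base_iff.mp hyb
        refine Set.mem_iUnion.mpr ⟨p, ?_⟩
        have hrp : T.r p = n := by rw [← T.retTime_eq hp]; exact hyt
        rw [if_pos hrp]
        refine ⟨hp, ?_⟩
        rw [Set.mem_preimage, ← T.retMap_eq hp]
        exact hyS
      have hbound1 : μ Tset ≤
          ∑' p : ℕ, μ (if T.r p = n then T.cell 0 p ∩ U^[T.r p] ⁻¹' S' else ∅) :=
        (measure_mono hcover).trans (measure_iUnion_le _)
      have hper : ∀ p : ℕ,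
          μ (if T.r p = n then T.cell 0 p ∩ U^[T.r p] ⁻¹' S' else ∅) * μ T.base
          ≤ D * μ S' * μ (if T.r p = n then T.cell (n - 1) p else ∅) := by
        intro p
        split_ifs with h
        · calc μ (T.cell 0 p ∩ U^[T.r p] ⁻¹' S') * μ T.base
              ≤ D * μ (T.cell 0 p) * μ S' := T.key_distortion p S' hS'meas hS'sub
          _ = D * μ S' * μ (T.cell 0 p) := by ring
          _ = D * μ S' * μ (T.cell (n - 1) p) := by
              rw [T.measure_cell_eq (show n - 1 < T.r p from by omega)]
        · simp
      have hμT : μ Tset * μ T.base ≤ D * μ S' * ENNReal.ofReal (C0 * ρ ^ (n - 1)) := by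
        calc μ Tset * μ T.base
            ≤ (∑' p : ℕ, μ (if T.r p = n then T.cell 0 p ∩ U^[T.r p] ⁻¹' S' else ∅)) * μ T.base :=
              mul_le_mul_left hbound1 _
          _ = ∑' p : ℕ, μ (if T.r p = n then T.cell 0 p ∩ U^[T.r p] ⁻¹' S' else ∅) * μ T.base :=
              ENNReal.tsum_mul_right.symm
          _ ≤ ∑' p : ℕ, D * μ S' * μ (if T.r p = n then T.cell (n - 1) p else ∅) :=
              ENNReal.tsum_le_tsum hper
          _ = D * μ S' * ∑' p : ℕ, μ (if T.r p = n then T.cell (n - 1) p else ∅) :=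
              ENNReal.tsum_mul_left
          _ ≤ D * μ S' * ENNReal.ofReal (C0 * ρ ^ (n - 1)) :=
              mul_le_mul_right (T.sum_cells_level htails n) _
      have hKineq : D * ENNReal.ofReal (C0 * ρ ^ (n - 1)) ≤
          ENNReal.ofReal (K * ρ ^ n) * μ T.base := by
        rw [hDdef, ← ENNReal.ofReal_mul (by linarith : (0:ℝ) ≤ 1 + T.Cd), ← hbeq,
          ← ENNReal.ofReal_mul (by positivity : (0:ℝ) ≤ K * ρ ^ n)]
        apply ENNReal.ofReal_le_ofReal
        have hρn : ρ ^ n = ρ * ρ ^ (n - 1) := by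
          conv_lhs => rw [show n = n - 1 + 1 from by omega]
          rw [pow_succ]
          ring
        have h1 : (1 + T.Cd) * C0 ≤ K * (ρ * b0) := by
          calc (1 + T.Cd) * C0 = (1 + T.Cd) * C0 / (ρ * b0) * (ρ * b0) := by
                field_simp
            _ ≤ K * (ρ * b0) := mul_le_mul_of_nonneg_right hKge (by positivity)
        calc (1 + T.Cd) * (C0 * ρ ^ (n - 1)) = (1 + T.Cd) * C0 * ρ ^ (n - 1) := by ring
          _ ≤ K * (ρ * b0) * ρ ^ (n - 1) := mul_le_mul_of_nonneg_right h1 (by positivity)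
          _ = K * (ρ * ρ ^ (n - 1)) * b0 := by ring
          _ = K * ρ ^ n * b0 := by rw [← hρn]
      have hfinal : μ Tset * μ T.base ≤
          (ENNReal.ofReal (K * ρ ^ n) * ∏ i ∈ F.erase i₀, ENNReal.ofReal (K * ρ ^ m i)) *
            μ T.base := by
        calc μ Tset * μ T.base
            ≤ D * μ S' * ENNReal.ofReal (C0 * ρ ^ (n - 1)) := hμT
          _ ≤ D * (∏ i ∈ F.erase i₀, ENNReal.ofReal (K * ρ ^ m i)) *
                ENNReal.ofReal (C0 * ρ ^ (n - 1)) :=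
              mul_le_mul_left (mul_le_mul_right (hS'bound.trans (le_of_eq hprod)) D) _
          _ = D * ENNReal.ofReal (C0 * ρ ^ (n - 1)) *
                ∏ i ∈ F.erase i₀, ENNReal.ofReal (K * ρ ^ m i) := by ring
          _ ≤ ENNReal.ofReal (K * ρ ^ n) * μ T.base *
                ∏ i ∈ F.erase i₀, ENNReal.ofReal (K * ρ ^ m i) :=
              mul_le_mul_left hKineq _
          _ = (ENNReal.ofReal (K * ρ ^ n) * ∏ i ∈ F.erase i₀, ENNReal.ofReal (K * ρ ^ m i)) *
                μ T.base := by ring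
      have hcancel : μ Tset ≤
          ENNReal.ofReal (K * ρ ^ n) * ∏ i ∈ F.erase i₀, ENNReal.ofReal (K * ρ ^ m i) :=
        (ENNReal.mul_le_mul_iff_left hbne hbtop).mp hfinal
      rw [hμS]
      refine hcancel.trans (le_of_eq ?_)
      exact Finset.mul_prod_erase F (fun i => ENNReal.ofReal (K * ρ ^ m i)) hi₀F
  intro F m hm
  calc μ {x : Δ | x ∈ T.base ∧ ∀ i ∈ F, T.retTime (T.retMap^[i] x) = m i}
      ≤ ∏ i ∈ F, ENNReal.ofReal (K * ρ ^ m i) := main F.card F m rfl hm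
    _ = ENNReal.ofReal (∏ i ∈ F, K * ρ ^ m i) :=
        (ENNReal.ofReal_prod_of_nonneg fun i _ => by positivity).symm
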